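/- Let D ⊂ ℂⁿ be a bounded domain, Y ⊂ ℂ^m a nonempty open set, and F : Y × D → D a holomorphic map such that for every y ∈ Y the map f_y = F(y,·) : D → D has image with compact closure contained in D. Let τ_F : Y → D assign to y the unique fixed point of f_y. Then for every y₀ ∈ Y, the differential of τ_F at y₀ is given by d(τ_F)_{y₀} = (id − d(f_{y₀})_{τ_F(y₀)})⁻¹ ∘ d_y F_{(y₀, τ_F(y₀))}, where d_y F_{(y₀, τ_F(y₀))} : ℂ^m → ℂⁿ denotes the partial differential of F in the Y-variables at (y₀, τ_F(y₀)), i.e., v ↦ dF_{(y₀, τ_F(y₀))}(v, 0). -/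

import Mathlib

open Metric Set Function Bornology

section Helpers

variable {E F : Type*} [NormedAddCommGroup E] [NormedSpace ℂ E]
  [NormedAddCommGroup F] [NormedSpace ℂ F]



/-- Multivariable Schwarz: operator norm bound for the derivative. -/
lemma schwarz_fderiv {u : E → F} {z₀ : E} {r R : ℝ} (hr : 0 < r) (hR : 0 ≤ R)
    (hd : DifferentiableOn ℂ u (ball z₀ r))
    (hm : MapsTo u (ball z₀ r) (ball (u z₀) R)) :
    ‖fderiv ℂ u z₀‖ ≤ R / r := by
  have hdat : DifferentiableAt ℂ u z₀ :=
    hd.differentiableAt (isOpen_ball.mem_nhds (mem_ball_self hr))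
  refine ContinuousLinearMap.opNorm_le_bound _ (div_nonneg hR hr.le) fun v => ?_
  rcases eq_or_ne v 0 with rfl | hv
  · simp
  have hv0 : 0 < ‖v‖ := norm_pos_iff.2 hv
  set φ : ℂ → F := fun ζ => u (z₀ + ζ • v) with hφ
  have hψ : ∀ ζ : ℂ, HasDerivAt (fun ζ : ℂ => z₀ + ζ • v) v ζ := by
    intro ζ
    simpa using ((hasDerivAt_id ζ).smul_const v).const_add z₀
  have hmem : ∀ ζ : ℂ, ζ ∈ ball (0:ℂ) (r / ‖v‖) → z₀ + ζ • v ∈ ball z₀ r := by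
    intro ζ hζ
    rw [mem_ball, dist_eq_norm] at hζ ⊢
    simp only [add_sub_cancel_left, norm_smul]
    calc ‖ζ‖ * ‖v‖ < r / ‖v‖ * ‖v‖ := by
          have := hζ; rw [sub_zero] at this
          exact mul_lt_mul_of_pos_right this hv0
      _ = r := by field_simp
  have hdψ : Differentiable ℂ (fun ζ : ℂ => z₀ + ζ • v) := fun ζ => (hψ ζ).differentiableAt
  have hdφ : DifferentiableOn ℂ φ (ball (0:ℂ) (r / ‖v‖)) :=
    hd.comp hdψ.differentiableOn (fun ζ hζ => hmem ζ hζ)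
  have hφ0 : φ 0 = u z₀ := by simp [hφ]
  have hmφ : MapsTo φ (ball (0:ℂ) (r / ‖v‖)) (ball (φ 0) R) := by
    intro ζ hζ
    rw [hφ0]
    exact hm (hmem ζ hζ)
  have hr' : 0 < r / ‖v‖ := div_pos hr hv0
  have hder : HasDerivAt φ (fderiv ℂ u z₀ v) 0 := by
    have h1 : HasFDerivAt u (fderiv ℂ u z₀) (z₀ + (0:ℂ) • v) := by
      simpa using hdat.hasFDerivAt
    simpa [hφ, Function.comp_def] using h1.comp_hasDerivAt (0:ℂ) (hψ 0)
  have := Complex.norm_deriv_le_div_of_mapsTo_ball hdφ (hmφ.mono_right ball_subset_closedBall) hr'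
  rw [hder.deriv] at this
  calc ‖fderiv ℂ u z₀ v‖ ≤ R / (r / ‖v‖) := this
    _ = R / r * ‖v‖ := by field_simp



/-- Multivariable Schwarz: Lipschitz-type distance bound. -/
lemma schwarz_dist {u : E → F} {z₀ : E} {r R : ℝ} (hr : 0 < r)
    (hd : DifferentiableOn ℂ u (ball z₀ r))
    (hm : MapsTo u (ball z₀ r) (ball (u z₀) R)) :
    ∀ w ∈ ball z₀ r, dist (u w) (u z₀) ≤ R / r * dist w z₀ := by
  intro w hw
  rcases eq_or_ne w z₀ with rfl | hne
  · simp
  have hd0 : 0 < ‖w - z₀‖ := by simpa [sub_eq_zero] using hne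
  set v : E := w - z₀ with hv
  set φ : ℂ → F := fun ζ => u (z₀ + ζ • v) with hφ
  have hmem : ∀ ζ : ℂ, ζ ∈ ball (0:ℂ) (r / ‖v‖) → z₀ + ζ • v ∈ ball z₀ r := by
    intro ζ hζ
    rw [mem_ball, dist_eq_norm] at hζ ⊢
    simp only [add_sub_cancel_left, norm_smul]
    rw [sub_zero] at hζ
    calc ‖ζ‖ * ‖v‖ < r / ‖v‖ * ‖v‖ := mul_lt_mul_of_pos_right hζ hd0
      _ = r := by field_simp
  have hdψ : Differentiable ℂ (fun ζ : ℂ => z₀ + ζ • v) := fun ζ => by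
    simpa using (((hasDerivAt_id ζ).smul_const v).const_add z₀).differentiableAt
  have hdφ : DifferentiableOn ℂ φ (ball (0:ℂ) (r / ‖v‖)) :=
    hd.comp hdψ.differentiableOn (fun ζ hζ => hmem ζ hζ)
  have hφ0 : φ 0 = u z₀ := by simp [hφ]
  have hmφ : MapsTo φ (ball (0:ℂ) (r / ‖v‖)) (ball (φ 0) R) := by
    intro ζ hζ; rw [hφ0]; exact hm (hmem ζ hζ)
  have h1 : (1:ℂ) ∈ ball (0:ℂ) (r / ‖v‖) := by
    rw [mem_ball, dist_zero_right, norm_one, lt_div_iff₀ hd0, one_mul]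
    rwa [mem_ball, dist_eq_norm] at hw
  have := Complex.dist_le_div_mul_dist_of_mapsTo_ball hdφ (hmφ.mono_right ball_subset_closedBall) h1
  have hφ1 : φ 1 = u w := by simp [hφ, hv]
  rw [hφ0, hφ1] at this
  calc dist (u w) (u z₀) ≤ R / (r / ‖v‖) * dist (1:ℂ) 0 := this
    _ = R / r * dist w z₀ := by
        rw [dist_zero_right, norm_one, mul_one, dist_eq_norm, ← hv]
        field_simp



lemma diffOn_iterate {D : Set E} (hD : IsOpen D) {u : E → E}
    (hd : DifferentiableOn ℂ u D) (hmaps : MapsTo u D D) (k : ℕ) :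
    DifferentiableOn ℂ (u^[k]) D := by
  induction k with
  | zero => simpa using differentiableOn_id
  | succ k ih =>
    rw [Function.iterate_succ']
    exact hd.comp ih (hmaps.iterate k)

lemma fderiv_iterate {D : Set E} (hD : IsOpen D) {u : E → E}
    (hd : DifferentiableOn ℂ u D) (hmaps : MapsTo u D D) {a : E} (ha : a ∈ D)
    (hfix : u a = a) (k : ℕ) :
    fderiv ℂ (u^[k]) a = (fderiv ℂ u a) ^ k := by
  induction k with
  | zero => simp [Function.iterate_zero, fderiv_id]; rfl
  | succ k ih =>
    rw [Function.iterate_succ', pow_succ']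
    have h1 : DifferentiableAt ℂ u a := hd.differentiableAt (hD.mem_nhds ha)
    have h2 : DifferentiableAt ℂ (u^[k]) a :=
      (diffOn_iterate hD hd hmaps k).differentiableAt (hD.mem_nhds ha)
    have hfixk : u^[k] a = a := Function.iterate_fixed hfix k
    have h1' : DifferentiableAt ℂ u (u^[k] a) := by rwa [hfixk]
    rw [fderiv_comp a h1' h2, hfixk, ih]
    rfl

/-- Derivative decay at an interior fixed point of a holomorphic self-map with
relatively compact image. -/
lemma pow_fderiv_decay {D : Set E} (hD : IsOpen D) (hbdd : IsBounded D)
    {u : E → E} (hd : DifferentiableOn ℂ u D)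
    (hcpt : IsCompact (closure (u '' D))) (hsub : closure (u '' D) ⊆ D)
    {a : E} (ha : a ∈ D) (hfix : u a = a) :
    ∃ t C : ℝ, 0 ≤ t ∧ t < 1 ∧ 0 ≤ C ∧ ∀ k, ‖(fderiv ℂ u a) ^ k‖ ≤ C * t ^ k := by
  have hmaps : MapsTo u D D := fun z hz => hsub (subset_closure (mem_image_of_mem u hz))
  -- thickening
  obtain ⟨δ, hδ0, hδ⟩ := hcpt.exists_thickening_subset_open hD hsub
  -- bound on D
  obtain ⟨M, hM0, hMD⟩ := hbdd.subset_ball_lt 0 a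
  set s : ℝ := δ / (2 * M) with hs
  have hs0 : 0 < s := div_pos hδ0 (by linarith)
  -- the expanded map
  set h : E → E := fun z => u z + (s : ℂ) • (u z - a) with hh
  have hmapsh : MapsTo h D D := by
    intro z hz
    apply hδ
    rw [mem_thickening_iff]
    refine ⟨u z, subset_closure (mem_image_of_mem u hz), ?_⟩
    have h1 : dist (h z) (u z) = s * ‖u z - a‖ := by
      rw [dist_eq_norm, hh]
      simp [norm_smul, Complex.norm_real, abs_of_pos hs0]
    have h2 : ‖u z - a‖ < M := by
      have := hMD (hmaps hz)
      rwa [mem_ball, dist_eq_norm] at this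
    have : s * ‖u z - a‖ ≤ s * M := by nlinarith [norm_nonneg (u z - a)]
    rw [h1]
    calc s * ‖u z - a‖ ≤ s * M := this
      _ = δ / 2 := by rw [hs]; field_simp
      _ < δ := by linarith
  have hdh : DifferentiableOn ℂ h D := by
    intro z hz
    exact ((hd z hz).add (((hd z hz).sub_const a).const_smul _))
  have hda : DifferentiableAt ℂ u a := hd.differentiableAt (hD.mem_nhds ha)
  have hfixh : h a = a := by simp [hh, hfix]
  have hfderivh : fderiv ℂ h a = ((1 : ℂ) + s) • fderiv ℂ u a := by
    have : HasFDerivAt h (((1 : ℂ) + s) • fderiv ℂ u a) a := by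
      have h1 : HasFDerivAt u (fderiv ℂ u a) a := hda.hasFDerivAt
      have h2 : HasFDerivAt (fun z => u z - a) (fderiv ℂ u a) a := h1.sub_const a
      have h3 := h1.add (h2.const_smul (s : ℂ))
      convert h3 using 1
      ext v
      simp [add_smul]
      simp [hh, Complex.coe_smul]
      rw [add_smul, one_smul]
    exact this.fderiv
  -- ball around a inside D
  obtain ⟨r, hr0, hrD⟩ := Metric.isOpen_iff.1 hD a ha
  have hMpos : (0:ℝ) < M := hM0
  -- Schwarz bound on iterates of h
  have key : ∀ k, ‖fderiv ℂ (h^[k]) a‖ ≤ M / r := by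
    intro k
    have hdk : DifferentiableOn ℂ (h^[k]) (ball a r) :=
      (diffOn_iterate hD hdh hmapsh k).mono hrD
    have hfixk : h^[k] a = a := Function.iterate_fixed hfixh k
    have hmk : MapsTo (h^[k]) (ball a r) (ball (h^[k] a) M) := by
      intro z hz
      rw [hfixk]
      exact hMD ((hmapsh.iterate k) (hrD hz))
    exact schwarz_fderiv hr0 hMpos.le hdk hmk
  -- now convert
  have hiter : ∀ k, fderiv ℂ (h^[k]) a = ((1:ℂ) + s) ^ k • (fderiv ℂ u a) ^ k := by
    intro k
    rw [fderiv_iterate hD hdh hmapsh ha hfixh k, hfderivh, smul_pow]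
  have hnorm1s : ‖(1:ℂ) + (s:ℂ)‖ = 1 + s := by
    have he : ((1:ℂ) + (s:ℂ)) = ((1 + s : ℝ) : ℂ) := by norm_cast
    rw [he, Complex.norm_real, Real.norm_eq_abs, abs_of_pos]
    linarith
  refine ⟨1 / (1 + s), M / r, by positivity, ?_, by positivity, fun k => ?_⟩
  · rw [div_lt_one (by linarith)]; linarith
  · have h1 := key k
    rw [hiter k, norm_smul, norm_pow, hnorm1s] at h1
    have hpow : (0:ℝ) < (1 + s) ^ k := by positivity
    rw [div_pow, one_pow, mul_one_div, le_div_iff₀ hpow]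
    calc ‖(fderiv ℂ u a) ^ k‖ * (1 + s) ^ k = (1 + s) ^ k * ‖(fderiv ℂ u a) ^ k‖ := by ring
      _ ≤ M / r := h1

/-- Iterated local contraction. -/
lemma contraction_iterate {g : E → E} {a : E} {ρ : ℝ} (hρ : 0 < ρ)
    (hcontr : ∀ z ∈ ball a ρ, ‖g z - a‖ ≤ (1/2) * ‖z - a‖) :
    ∀ z ∈ ball a ρ, ∀ j, g^[j] z ∈ ball a ρ ∧ ‖g^[j] z - a‖ ≤ (1/2)^j * ‖z - a‖ := by
  intro z hz j
  induction j with
  | zero => simpa using hz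
  | succ j ih =>
    obtain ⟨h1, h2⟩ := ih
    rw [Function.iterate_succ']
    have hn : ‖g^[j] z - a‖ < ρ := by rwa [mem_ball, dist_eq_norm] at h1
    constructor
    · rw [mem_ball, dist_eq_norm]
      calc ‖g (g^[j] z) - a‖ ≤ (1/2) * ‖g^[j] z - a‖ := hcontr _ h1
        _ < ρ := by nlinarith [norm_nonneg (g^[j] z - a)]
    · calc ‖g (g^[j] z) - a‖ ≤ (1/2) * ‖g^[j] z - a‖ := hcontr _ h1
        _ ≤ (1/2) * ((1/2)^j * ‖z - a‖) := by nlinarith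
        _ = (1/2)^(j+1) * ‖z - a‖ := by ring

/-- Key orbit lemma: iterates accumulate at the fixed point. -/
lemma orbit_mem_closure {D : Set E} (hD : IsOpen D) (hconn : IsPreconnected D)
    (hbdd : IsBounded D) {u : E → E} (hd : DifferentiableOn ℂ u D)
    (hcpt : IsCompact (closure (u '' D))) (hsub : closure (u '' D) ⊆ D)
    {a : E} (ha : a ∈ D) (hfix : u a = a) :
    ∀ z ∈ D, a ∈ closure (Set.range fun j => u^[j] z) := by
  have hmaps : MapsTo u D D := fun z hz => hsub (subset_closure (mem_image_of_mem u hz))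
  obtain ⟨t, C, ht0, ht1, hC0, hbound⟩ := pow_fderiv_decay hD hbdd hd hcpt hsub ha hfix
  -- choose N ≥ 1 with ‖A^N‖ < 1/4
  have htend : Filter.Tendsto (fun k => C * t ^ k) Filter.atTop (nhds 0) := by
    simpa using (tendsto_pow_atTop_nhds_zero_of_lt_one ht0 ht1).const_mul C
  obtain ⟨N₀, hN₀⟩ := (Filter.tendsto_atTop'.1 htend) (Set.Iio (1/4 : ℝ))
    (Iio_mem_nhds (by norm_num))
  set N := N₀ + 1 with hN
  have hAN : ‖(fderiv ℂ u a) ^ N‖ < 1/4 :=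
    lt_of_le_of_lt (hbound N) (hN₀ N (Nat.le_add_right _ _))
  set g : E → E := u^[N] with hg
  have hgd : DifferentiableOn ℂ g D := diffOn_iterate hD hd hmaps N
  have hgmaps : MapsTo g D D := hmaps.iterate N
  have hgfix : g a = a := Function.iterate_fixed hfix N
  have hgA : fderiv ℂ g a = (fderiv ℂ u a) ^ N := fderiv_iterate hD hd hmaps ha hfix N
  -- local contraction
  have hgda : DifferentiableAt ℂ g a := hgd.differentiableAt (hD.mem_nhds ha)
  have hlo := hgda.hasFDerivAt.isLittleO.def (show (0:ℝ) < 1/4 by norm_num)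
  have hev : ∀ᶠ z in nhds a, z ∈ D ∧ ‖g z - g a - (fderiv ℂ g a) (z - a)‖ ≤ 1/4 * ‖z - a‖ :=
    Filter.Eventually.and (hD.mem_nhds ha : ∀ᶠ z in nhds a, z ∈ D) hlo
  obtain ⟨ρ, hρ0, hρsub⟩ := Metric.eventually_nhds_iff_ball.1 hev
  have hρD : ball a ρ ⊆ D := fun z hz => (hρsub z hz).1
  have hcontr : ∀ z ∈ ball a ρ, ‖g z - a‖ ≤ (1/2) * ‖z - a‖ := by
    intro z hz
    have h1 := (hρsub z hz).2
    rw [hgfix, hgA] at h1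
    have h2 : ‖(fderiv ℂ u a ^ N) (z - a)‖ ≤ (1/4) * ‖z - a‖ := by
      calc ‖(fderiv ℂ u a ^ N) (z - a)‖ ≤ ‖fderiv ℂ u a ^ N‖ * ‖z - a‖ :=
            ContinuousLinearMap.le_opNorm _ _
        _ ≤ (1/4) * ‖z - a‖ := by nlinarith [norm_nonneg (z - a)]
    calc ‖g z - a‖ = ‖(g z - a - (fderiv ℂ u a ^ N) (z - a)) + (fderiv ℂ u a ^ N) (z - a)‖ := by
          congr 1; abel
      _ ≤ ‖g z - a - (fderiv ℂ u a ^ N) (z - a)‖ + ‖(fderiv ℂ u a ^ N) (z - a)‖ :=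
          norm_add_le _ _
      _ ≤ 1/4 * ‖z - a‖ + 1/4 * ‖z - a‖ := add_le_add h1 h2
      _ = 1/2 * ‖z - a‖ := by ring
  have hit := contraction_iterate hρ0 hcontr
  -- convergence from points of the small ball
  have hball_tendsto : ∀ w ∈ ball a ρ,
      Filter.Tendsto (fun j => g^[j] w) Filter.atTop (nhds a) := by
    intro w hw
    rw [tendsto_iff_norm_sub_tendsto_zero]
    have hud : Filter.Tendsto (fun j : ℕ => (1/2:ℝ)^j * ‖w - a‖) Filter.atTop (nhds 0) := by
      simpa using (tendsto_pow_atTop_nhds_zero_of_lt_one (r := (1/2:ℝ)) (by norm_num) (by norm_num)).mul_const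
        ‖w - a‖
    refine squeeze_zero (fun j => norm_nonneg _) (fun j => (hit w hw j).2) hud
  -- the basin
  set S : Set E := {z ∈ D | Filter.Tendsto (fun j => g^[j] z) Filter.atTop (nhds a)} with hS
  have haS : a ∈ S := ⟨ha, by simpa [Function.iterate_fixed hgfix] using tendsto_const_nhds⟩
  -- S is open
  have hSopen : IsOpen S := by
    rw [isOpen_iff_mem_nhds]
    intro z hzS
    obtain ⟨hzD, hztend⟩ := hzS
    have : ∀ᶠ j in Filter.atTop, g^[j] z ∈ ball a ρ :=
      hztend (isOpen_ball.mem_nhds (by simpa [mem_ball, dist_self] using hρ0))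
    obtain ⟨j₀, hj₀⟩ := this.exists
    have hcont : ContinuousOn (g^[j₀]) D := (diffOn_iterate hD hgd hgmaps j₀).continuousOn
    have hVopen : IsOpen (D ∩ (g^[j₀]) ⁻¹' (ball a ρ)) :=
      hcont.isOpen_inter_preimage hD isOpen_ball
    have hzV : z ∈ D ∩ (g^[j₀]) ⁻¹' (ball a ρ) := ⟨hzD, hj₀⟩
    refine Filter.mem_of_superset (hVopen.mem_nhds hzV) ?_
    rintro z' ⟨hz'D, hz'V⟩
    refine ⟨hz'D, ?_⟩
    have htail : Filter.Tendsto (fun i => g^[i + j₀] z') Filter.atTop (nhds a) := by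
      have : (fun i => g^[i + j₀] z') = fun i => g^[i] (g^[j₀] z') := by
        funext i; rw [Function.iterate_add_apply]
      rw [this]
      exact hball_tendsto _ hz'V
    have := Filter.tendsto_add_atTop_iff_nat (f := fun j => g^[j] z') (l := nhds a) j₀
    exact this.1 htail
  -- S is relatively closed, via uniform Lipschitz bounds
  obtain ⟨M, hM0, hMD⟩ := hbdd.subset_ball_lt 0 a
  have hRbig : ∀ w ∈ D, D ⊆ ball w (2*M + 1) := by
    intro w hw x hx
    have h1 := hMD hw; have h2 := hMD hx
    rw [mem_ball] at h1 h2 ⊢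
    calc dist x w ≤ dist x a + dist a w := dist_triangle _ _ _
      _ < 2*M + 1 := by rw [dist_comm a w] at *; linarith
  have hSclosed : D ∩ closure S ⊆ S := by
    rintro z ⟨hzD, hzcl⟩
    obtain ⟨r, hr0, hrD⟩ := Metric.isOpen_iff.1 hD z hzD
    have hLip : ∀ j, ∀ w ∈ ball z r, dist (g^[j] w) (g^[j] z) ≤ (2*M+1)/r * dist w z := by
      intro j w hw
      have hdj : DifferentiableOn ℂ (g^[j]) (ball z r) :=
        (diffOn_iterate hD hgd hgmaps j).mono hrD
      have hmj : MapsTo (g^[j]) (ball z r) (ball (g^[j] z) (2*M+1)) := by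
        intro x hx
        exact hRbig _ ((hgmaps.iterate j) hzD) ((hgmaps.iterate j) (hrD hx))
      exact schwarz_dist hr0 hdj hmj w hw
    refine ⟨hzD, ?_⟩
    rw [Metric.tendsto_atTop]
    intro ε hε
    have hd2 : 0 < (2*M+1)/r := by positivity
    obtain ⟨w, hwS, hwz⟩ : ∃ w ∈ S, dist w z < min r (ε/2 / ((2*M+1)/r)) := by
      have := Metric.mem_closure_iff.1 hzcl (min r (ε/2 / ((2*M+1)/r)))
        (lt_min hr0 (by positivity))
      obtain ⟨w, hwS, hwz⟩ := this
      exact ⟨w, hwS, by rwa [dist_comm] at hwz⟩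
    have hwball : w ∈ ball z r := by rw [mem_ball]; exact lt_of_lt_of_le hwz (min_le_left _ _)
    obtain ⟨j₀, hj₀⟩ := (Metric.tendsto_atTop.1 hwS.2) (ε/2) (by linarith)
    refine ⟨j₀, fun j hj => ?_⟩
    calc dist (g^[j] z) a ≤ dist (g^[j] z) (g^[j] w) + dist (g^[j] w) a := dist_triangle _ _ _
      _ ≤ (2*M+1)/r * dist w z + dist (g^[j] w) a := by
          rw [dist_comm (g^[j] z)]
          exact add_le_add (hLip j w hwball) le_rfl
      _ < (2*M+1)/r * (ε/2 / ((2*M+1)/r)) + ε/2 := by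
          have h3 := hj₀ j hj
          have h4 : dist w z < ε/2 / ((2*M+1)/r) := lt_of_lt_of_le hwz (min_le_right _ _)
          have h5 : (2*M+1)/r * dist w z < (2*M+1)/r * (ε/2 / ((2*M+1)/r)) :=
            mul_lt_mul_of_pos_left h4 hd2
          linarith
      _ = ε := by field_simp; ring
  -- connectedness: S = D
  have hSD : ∀ z ∈ D, z ∈ S := by
    by_contra hcon
    push_neg at hcon
    obtain ⟨z, hzD, hzS⟩ := hcon
    have hcover : D ⊆ S ∪ (closure S)ᶜ := by
      intro x hx
      by_cases hxS : x ∈ closure S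
      · exact Or.inl (hSclosed ⟨hx, hxS⟩)
      · exact Or.inr hxS
    have h1 : (D ∩ S).Nonempty := ⟨a, ha, haS⟩
    have h2 : (D ∩ (closure S)ᶜ).Nonempty := by
      refine ⟨z, hzD, fun hzc => hzS (hSclosed ⟨hzD, hzc⟩)⟩
    obtain ⟨x, hxD, hxS, hxc⟩ := hconn S (closure S)ᶜ hSopen (isClosed_closure.isOpen_compl)
      hcover h1 h2
    exact hxc (subset_closure hxS)
  -- conclude
  intro z hzD
  have hztend : Filter.Tendsto (fun j => g^[j] z) Filter.atTop (nhds a) := (hSD z hzD).2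
  have heq : ∀ j, g^[j] z = u^[N * j] z := by
    intro j
    rw [Function.iterate_mul]
  refine mem_closure_of_tendsto (f := fun j => g^[j] z) hztend ?_
  filter_upwards with j
  exact ⟨N * j, (heq j).symm⟩

/-- If some power of `A` has norm `< 1` then `1 - A` is a unit. -/
lemma isUnit_one_sub_of_pow {R : Type*} [NormedRing R] [CompleteSpace R]
    {A : R} {N : ℕ} (hN : 1 ≤ N) (h : ‖A ^ N‖ < 1) : IsUnit (1 - A) := by
  set S : R := ∑ i ∈ Finset.range N, A ^ i with hS
  set u : Rˣ := Units.oneSub (A ^ N) h with hu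
  have h1 : (1 - A) * S = (u : R) := by
    rw [Units.val_oneSub, hS]
    calc (1 - A) * ∑ i ∈ Finset.range N, A ^ i
        = -((A - 1) * ∑ i ∈ Finset.range N, A ^ i) := by rw [← neg_mul, neg_sub]
      _ = -(A ^ N - 1) := by rw [mul_geom_sum]
      _ = 1 - A ^ N := neg_sub _ _
  have h2 : S * (1 - A) = (u : R) := by
    rw [Units.val_oneSub, hS]
    calc (∑ i ∈ Finset.range N, A ^ i) * (1 - A)
        = -((∑ i ∈ Finset.range N, A ^ i) * (A - 1)) := by rw [← mul_neg, neg_sub]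
      _ = -(A ^ N - 1) := by rw [geom_sum_mul]
      _ = 1 - A ^ N := neg_sub _ _
  have hcommA : Commute A (u : R) := by
    rw [Units.val_oneSub]
    exact (Commute.one_right A).sub_right (Commute.pow_right (Commute.refl A) N)
  have hcommInv : Commute A ((u⁻¹ : Rˣ) : R) := hcommA.units_inv_right
  refine ⟨⟨1 - A, S * ((u⁻¹ : Rˣ) : R), ?_, ?_⟩, rfl⟩
  · rw [← mul_assoc, h1, Units.mul_inv]
  · have hcomm1A : Commute (1 - A) ((u⁻¹ : Rˣ) : R) :=
      Commute.sub_left (Commute.one_left _) hcommInv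
    calc S * ((u⁻¹ : Rˣ) : R) * (1 - A) = S * (((u⁻¹ : Rˣ) : R) * (1 - A)) := by
          rw [mul_assoc]
      _ = S * ((1 - A) * ((u⁻¹ : Rˣ) : R)) := by rw [hcomm1A.eq]
      _ = S * (1 - A) * ((u⁻¹ : Rˣ) : R) := by rw [mul_assoc]
      _ = (u : R) * ((u⁻¹ : Rˣ) : R) := by rw [h2]
      _ = 1 := Units.mul_inv u

/-- Local half-contraction of a high iterate near an interior fixed point. -/
lemma local_contraction {D : Set E} (hD : IsOpen D) (hbdd : IsBounded D)
    {u : E → E} (hd : DifferentiableOn ℂ u D)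
    (hcpt : IsCompact (closure (u '' D))) (hsub : closure (u '' D) ⊆ D)
    {a : E} (ha : a ∈ D) (hfix : u a = a) :
    ∃ N : ℕ, 1 ≤ N ∧ ∃ ρ > 0, ball a ρ ⊆ D ∧
      ∀ z ∈ ball a ρ, ‖u^[N] z - a‖ ≤ (1/2) * ‖z - a‖ := by
  have hmaps : MapsTo u D D := fun z hz => hsub (subset_closure (mem_image_of_mem u hz))
  obtain ⟨t, C, ht0, ht1, hC0, hbound⟩ := pow_fderiv_decay hD hbdd hd hcpt hsub ha hfix
  have htend : Filter.Tendsto (fun k => C * t ^ k) Filter.atTop (nhds 0) := by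
    simpa using (tendsto_pow_atTop_nhds_zero_of_lt_one ht0 ht1).const_mul C
  obtain ⟨N₀, hN₀⟩ := (Filter.tendsto_atTop'.1 htend) (Set.Iio (1/4 : ℝ))
    (Iio_mem_nhds (by norm_num))
  set N := N₀ + 1 with hN
  have hAN : ‖(fderiv ℂ u a) ^ N‖ < 1/4 :=
    lt_of_le_of_lt (hbound N) (hN₀ N (Nat.le_add_right _ _))
  set g : E → E := u^[N] with hg
  have hgd : DifferentiableOn ℂ g D := diffOn_iterate hD hd hmaps N
  have hgfix : g a = a := Function.iterate_fixed hfix N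
  have hgA : fderiv ℂ g a = (fderiv ℂ u a) ^ N := fderiv_iterate hD hd hmaps ha hfix N
  have hgda : DifferentiableAt ℂ g a := hgd.differentiableAt (hD.mem_nhds ha)
  have hlo := hgda.hasFDerivAt.isLittleO.def (show (0:ℝ) < 1/4 by norm_num)
  have hev : ∀ᶠ z in nhds a, z ∈ D ∧ ‖g z - g a - (fderiv ℂ g a) (z - a)‖ ≤ 1/4 * ‖z - a‖ :=
    Filter.Eventually.and (hD.mem_nhds ha : ∀ᶠ z in nhds a, z ∈ D) hlo
  obtain ⟨ρ, hρ0, hρsub⟩ := Metric.eventually_nhds_iff_ball.1 hev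
  refine ⟨N, Nat.le_add_left 1 N₀, ρ, hρ0, fun z hz => (hρsub z hz).1, fun z hz => ?_⟩
  have h1 := (hρsub z hz).2
  rw [hgfix, hgA] at h1
  have h2 : ‖(fderiv ℂ u a ^ N) (z - a)‖ ≤ (1/4) * ‖z - a‖ := by
    calc ‖(fderiv ℂ u a ^ N) (z - a)‖ ≤ ‖fderiv ℂ u a ^ N‖ * ‖z - a‖ :=
          ContinuousLinearMap.le_opNorm _ _
      _ ≤ (1/4) * ‖z - a‖ := by nlinarith [norm_nonneg (z - a)]
  calc ‖g z - a‖ = ‖(g z - a - (fderiv ℂ u a ^ N) (z - a)) + (fderiv ℂ u a ^ N) (z - a)‖ := by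
        congr 1; abel
    _ ≤ ‖g z - a - (fderiv ℂ u a ^ N) (z - a)‖ + ‖(fderiv ℂ u a ^ N) (z - a)‖ :=
        norm_add_le _ _
    _ ≤ 1/4 * ‖z - a‖ + 1/4 * ‖z - a‖ := add_le_add h1 h2
    _ = 1/2 * ‖z - a‖ := by ring

end Helpers

set_option maxHeartbeats 1600000 in
/-- Theorem 2.3, differential formula (bounded-domain case): for every `y₀ ∈ Y`,
`d(τ_F)_{y₀} = (id − d(f_{y₀})_{τ_F(y₀)})⁻¹ ∘ d_y F_{(y₀, τ_F(y₀))}`, expressed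
via the bijectivity of `id − d(f_{y₀})_{τ_F(y₀)}` together with
`(id − d(f_{y₀})_{τ_F(y₀)}) ∘ d(τ_F)_{y₀} = d_y F_{(y₀, τ_F(y₀))}`. -/
theorem heins_map_differential_formula (n m : ℕ)
    (D : Set (Fin n → ℂ)) (hDopen : IsOpen D) (hDconn : IsConnected D)
    (hDbdd : Bornology.IsBounded D)
    (Y : Set (Fin m → ℂ)) (hYopen : IsOpen Y) (hYne : Y.Nonempty)
    (F : (Fin m → ℂ) × (Fin n → ℂ) → (Fin n → ℂ))
    (hF : DifferentiableOn ℂ F (Y ×ˢ D))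
    (hFmaps : ∀ y ∈ Y, ∀ z ∈ D, F (y, z) ∈ D)
    (hFcpt : ∀ y ∈ Y, IsCompact (closure ((fun z => F (y, z)) '' D)))
    (hFsub : ∀ y ∈ Y, closure ((fun z => F (y, z)) '' D) ⊆ D)
    (τ : (Fin m → ℂ) → (Fin n → ℂ))
    (hτmem : ∀ y ∈ Y, τ y ∈ D) (hτfix : ∀ y ∈ Y, F (y, τ y) = τ y) :
    ∀ y₀ ∈ Y, DifferentiableAt ℂ τ y₀ ∧
      Function.Bijective
        (ContinuousLinearMap.id ℂ (Fin n → ℂ) -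
          fderiv ℂ (fun z => F (y₀, z)) (τ y₀)) ∧
      ∀ v : Fin m → ℂ,
        (ContinuousLinearMap.id ℂ (Fin n → ℂ) -
            fderiv ℂ (fun z => F (y₀, z)) (τ y₀)) (fderiv ℂ τ y₀ v) =
          fderiv ℂ F (y₀, τ y₀) (v, 0) := by
  intro y₀ hy₀
  set z₀ : Fin n → ℂ := τ y₀ with hz₀def
  have hz₀D : z₀ ∈ D := hτmem y₀ hy₀
  -- the slice maps
  have hfd : ∀ y ∈ Y, DifferentiableOn ℂ (fun z => F (y, z)) D := by
    intro y hy
    have hψ : Differentiable ℂ (fun z : Fin n → ℂ => ((y, z) : _ × _)) :=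
      (differentiable_const y).prodMk differentiable_id
    exact hF.comp hψ.differentiableOn (fun z hz => ⟨hy, hz⟩)
  have hfmaps : ∀ y ∈ Y, MapsTo (fun z => F (y, z)) D D := fun y hy z hz => hFmaps y hy z hz
  have hfix : F (y₀, z₀) = z₀ := hτfix y₀ hy₀
  -- main objects
  set A : (Fin n → ℂ) →L[ℂ] (Fin n → ℂ) := fderiv ℂ (fun z => F (y₀, z)) z₀ with hAdef
  set Ec : (Fin n → ℂ) →L[ℂ] (Fin n → ℂ) := ContinuousLinearMap.id ℂ (Fin n → ℂ) - A
    with hEcdef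
  have hEc1 : Ec = 1 - A := rfl
  -- `Ec` is a unit
  obtain ⟨t, C, ht0, ht1, hC0, hbound⟩ :=
    pow_fderiv_decay hDopen hDbdd (hfd y₀ hy₀) (hFcpt y₀ hy₀) (hFsub y₀ hy₀) hz₀D hfix
  have htend : Filter.Tendsto (fun k => C * t ^ k) Filter.atTop (nhds 0) := by
    simpa using (tendsto_pow_atTop_nhds_zero_of_lt_one ht0 ht1).const_mul C
  obtain ⟨N₀, hN₀⟩ := (Filter.tendsto_atTop'.1 htend) (Set.Iio (1 : ℝ))
    (Iio_mem_nhds (by norm_num))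
  have hANlt : ‖A ^ (N₀ + 1)‖ < 1 :=
    lt_of_le_of_lt (hbound (N₀ + 1)) (hN₀ (N₀ + 1) (Nat.le_add_right _ _))
  have hEcunit : IsUnit Ec := by
    rw [hEc1]
    exact isUnit_one_sub_of_pow (Nat.le_add_left 1 N₀) hANlt
  obtain ⟨uE, huE⟩ := hEcunit
  set G : (Fin n → ℂ) →L[ℂ] (Fin n → ℂ) := (↑(uE⁻¹) : (Fin n → ℂ) →L[ℂ] (Fin n → ℂ)) with hGdef
  have hGE : ∀ x, G (Ec x) = x := by
    intro x
    have h := uE.inv_mul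
    rw [huE] at h
    calc G (Ec x) = (G * Ec) x := (ContinuousLinearMap.mul_apply _ _ _).symm
      _ = (1 : (Fin n → ℂ) →L[ℂ] (Fin n → ℂ)) x := by rw [h]
      _ = x := ContinuousLinearMap.one_apply x
  have hEG : ∀ x, Ec (G x) = x := by
    intro x
    have h := uE.mul_inv
    rw [huE] at h
    calc Ec (G x) = (Ec * G) x := (ContinuousLinearMap.mul_apply _ _ _).symm
      _ = (1 : (Fin n → ℂ) →L[ℂ] (Fin n → ℂ)) x := by rw [h]
      _ = x := ContinuousLinearMap.one_apply x
  have hbij : Function.Bijective Ec :=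
    Function.bijective_iff_has_inverse.mpr ⟨G, fun x => hGE x, fun x => hEG x⟩
  -- continuity of τ at y₀
  have htau_cont : Filter.Tendsto τ (nhds y₀) (nhds z₀) := by
    obtain ⟨N₁, hN₁1, ρ, hρ0, hρD, hcontr⟩ := local_contraction hDopen hDbdd (hfd y₀ hy₀)
      (hFcpt y₀ hy₀) (hFsub y₀ hy₀) hz₀D hfix
    set 𝒢 : (Fin m → ℂ) × (Fin n → ℂ) → (Fin m → ℂ) × (Fin n → ℂ) :=
      fun p => (p.1, F p) with h𝒢
    have h𝒢maps : MapsTo 𝒢 (Y ×ˢ D) (Y ×ˢ D) := by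
      rintro ⟨y', z⟩ ⟨hy', hz⟩
      exact ⟨hy', hFmaps y' hy' z hz⟩
    have h𝒢iter : ∀ (k : ℕ), ∀ p ∈ Y ×ˢ D, 𝒢^[k] p = (p.1, (fun z => F (p.1, z))^[k] p.2) := by
      intro k
      induction k with
      | zero => intro p _; simp
      | succ k ih =>
        intro p hp
        rw [Function.iterate_succ_apply', Function.iterate_succ_apply', ih p hp]
    have h𝒢cont : ∀ k, ContinuousOn (𝒢^[k]) (Y ×ˢ D) := by
      intro k
      induction k with
      | zero => simpa using continuousOn_id
      | succ k ih =>
        rw [Function.iterate_succ']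
        exact ContinuousOn.comp (continuousOn_fst.prodMk hF.continuousOn) ih (h𝒢maps.iterate k)
    rw [Metric.tendsto_nhds]
    intro ε hε
    set ρ' : ℝ := min ρ ε / 2 with hρ'def
    have hρ'0 : 0 < ρ' := by
      have : 0 < min ρ ε := lt_min hρ0 hε
      positivity
    have hρ'ball : closedBall z₀ ρ' ⊆ ball z₀ ρ := by
      intro x hx
      rw [mem_closedBall] at hx
      rw [mem_ball]
      have h1 : ρ' ≤ ρ / 2 := by
        rw [hρ'def]
        have := min_le_left ρ ε
        linarith
      linarith
    have hcballD : closedBall z₀ ρ' ⊆ D := hρ'ball.trans hρD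
    set W : Set ((Fin m → ℂ) × (Fin n → ℂ)) :=
      (Y ×ˢ D) ∩ (fun p => (𝒢^[N₁] p).2) ⁻¹' (ball z₀ ρ') with hWdef
    have hWopen : IsOpen W :=
      (continuous_snd.comp_continuousOn (h𝒢cont N₁)).isOpen_inter_preimage
        (hYopen.prod hDopen) isOpen_ball
    have hWsub : ({y₀} ×ˢ closedBall z₀ ρ') ⊆ W := by
      rintro ⟨y', z⟩ ⟨hy', hz⟩
      have hy'' : y' = y₀ := hy'
      have hy'Y : y' ∈ Y := by rw [hy'']; exact hy₀
      have hzD : z ∈ D := hcballD hz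
      refine ⟨⟨hy'Y, hzD⟩, ?_⟩
      show (𝒢^[N₁] (y', z)).2 ∈ ball z₀ ρ'
      rw [h𝒢iter N₁ (y', z) ⟨hy'Y, hzD⟩]
      show (fun z => F (y', z))^[N₁] z ∈ ball z₀ ρ'
      rw [hy'']
      have hco := hcontr z (hρ'ball hz)
      have hzb : ‖z - z₀‖ ≤ ρ' := by rwa [mem_closedBall, dist_eq_norm] at hz
      rw [mem_ball, dist_eq_norm]
      calc ‖(fun z => F (y₀, z))^[N₁] z - z₀‖ ≤ 1/2 * ‖z - z₀‖ := hco
        _ ≤ 1/2 * ρ' := by linarith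
        _ < ρ' := by linarith
    obtain ⟨U, V, hUopen, _hVopen, hU, hV, hUV⟩ := generalized_tube_lemma isCompact_singleton
      (isCompact_closedBall z₀ ρ') hWopen hWsub
    filter_upwards [hUopen.mem_nhds (hU rfl), hYopen.mem_nhds hy₀] with y hyU hyY
    have hfyd : DifferentiableOn ℂ (fun z => F (y, z)) D := hfd y hyY
    have hfymaps : MapsTo (fun z => F (y, z)) D D := hfmaps y hyY
    set gy : (Fin n → ℂ) → (Fin n → ℂ) := (fun z => F (y, z))^[N₁] with hgydef
    have hgyd : DifferentiableOn ℂ gy D := diffOn_iterate hDopen hfyd hfymaps N₁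
    have himg : gy '' D ⊆ (fun z => F (y, z)) '' D := by
      rintro _ ⟨z, hz, rfl⟩
      obtain ⟨k, hk⟩ : ∃ k, N₁ = k + 1 := ⟨N₁ - 1, (Nat.succ_pred_eq_of_pos hN₁1).symm⟩
      rw [hgydef, hk, Function.iterate_succ_apply']
      exact mem_image_of_mem _ ((hfymaps.iterate k) hz)
    have hgycpt : IsCompact (closure (gy '' D)) :=
      (hFcpt y hyY).of_isClosed_subset isClosed_closure (closure_mono himg)
    have hgysub : closure (gy '' D) ⊆ D := (closure_mono himg).trans (hFsub y hyY)
    have hgyfix : gy (τ y) = τ y := Function.iterate_fixed (hτfix y hyY) N₁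
    have horb := orbit_mem_closure hDopen hDconn.isPreconnected hDbdd hgyd hgycpt hgysub
      (hτmem y hyY) hgyfix z₀ hz₀D
    have hstay : ∀ j, gy^[j] z₀ ∈ closedBall z₀ ρ' := by
      intro j
      induction j with
      | zero => simpa using hρ'0.le
      | succ j ih =>
        rw [Function.iterate_succ_apply']
        have hmemW : ((y, gy^[j] z₀) : _ × _) ∈ W := hUV ⟨hyU, hV ih⟩
        have h3 := h𝒢iter N₁ _ hmemW.1
        have h2 : (𝒢^[N₁] ((y, gy^[j] z₀) : _ × _)).2 ∈ ball z₀ ρ' := hmemW.2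
        rw [h3] at h2
        exact ball_subset_closedBall h2
    have hτmemB : τ y ∈ closedBall z₀ ρ' := by
      have hcl : closure (Set.range fun j => gy^[j] z₀) ⊆ closedBall z₀ ρ' :=
        closure_minimal (by rintro _ ⟨j, rfl⟩; exact hstay j) Metric.isClosed_closedBall
      exact hcl horb
    rw [mem_closedBall] at hτmemB
    have hρ'ε : ρ' < ε := by
      rw [hρ'def]
      have := min_le_right ρ ε
      linarith
    exact lt_of_le_of_lt hτmemB hρ'ε
  -- the total derivative of F
  have hdFat : DifferentiableAt ℂ F (y₀, z₀) :=
    hF.differentiableAt ((hYopen.prod hDopen).mem_nhds ⟨hy₀, hz₀D⟩)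
  set dF := fderiv ℂ F (y₀, z₀) with hdFdef
  have hdF : HasFDerivAt F dF (y₀, z₀) := hdFat.hasFDerivAt
  have hApt : ∀ w, A w = dF (0, w) := by
    intro w
    have hcomp : HasFDerivAt (fun z => F (y₀, z))
        (dF.comp (ContinuousLinearMap.inr ℂ (Fin m → ℂ) (Fin n → ℂ))) z₀ :=
      hdF.comp z₀ (hasFDerivAt_prodMk_right y₀ z₀)
    rw [hAdef, hcomp.fderiv]
    rfl
  have hsplit : ∀ (Δ : Fin m → ℂ) (w : Fin n → ℂ), dF (Δ, w) = dF (Δ, 0) + dF (0, w) := by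
    intro Δ w
    rw [← map_add]
    congr 1
    simp [Prod.ext_iff]
  have hEcw : ∀ w : Fin n → ℂ, Ec w = w - dF (0, w) := by
    intro w
    rw [hEc1, ContinuousLinearMap.sub_apply, ContinuousLinearMap.one_apply, hApt]
  -- key eventual estimate
  have htend2 : Filter.Tendsto (fun y => ((y, τ y) : _ × _)) (nhds y₀) (nhds (y₀, z₀)) :=
    Filter.Tendsto.prodMk_nhds Filter.tendsto_id htau_cont
  have hkey : ∀ c : ℝ, 0 < c → ∀ᶠ y in nhds y₀,
      ‖(τ y - z₀) - dF (y - y₀, τ y - z₀)‖ ≤ c * (‖y - y₀‖ + ‖τ y - z₀‖) := by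
    intro c hc
    filter_upwards [hYopen.mem_nhds hy₀, htend2.eventually (hdF.isLittleO.def hc)]
      with y hyY hlo
    have h1 : F (y, τ y) = τ y := hτfix y hyY
    have h2 : ((y, τ y) : _ × _) - (y₀, z₀) = (y - y₀, τ y - z₀) := rfl
    rw [h1, hfix, h2] at hlo
    refine le_trans hlo ?_
    have h3 : ‖((y - y₀, τ y - z₀) : _ × _)‖ ≤ ‖y - y₀‖ + ‖τ y - z₀‖ := by
      rw [Prod.norm_def]
      exact max_le (by simp [norm_nonneg]) (by simp [norm_nonneg])
    exact mul_le_mul_of_nonneg_left h3 hc.le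
  set c₀ : ℝ := ‖G‖ with hc₀def
  have hc₀0 : 0 ≤ c₀ := norm_nonneg _
  have hnormfst : ∀ Δ : Fin m → ℂ, ‖((Δ, (0 : Fin n → ℂ)) : _ × _)‖ = ‖Δ‖ := by
    intro Δ
    rw [Prod.norm_def]
    simp [norm_nonneg]
  -- first-order bound on `τ`
  set c1 : ℝ := 1 / (2 * (c₀ + 1)) with hc1def
  have hc1 : 0 < c1 := by positivity
  set C₁ : ℝ := 2 * c₀ * ‖dF‖ + 1 with hC₁def
  have hC₁0 : 0 < C₁ := by positivity
  have hwle : ∀ᶠ y in nhds y₀, ‖τ y - z₀‖ ≤ C₁ * ‖y - y₀‖ := by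
    filter_upwards [hkey c1 hc1] with y hk
    set Δ := y - y₀
    set w := τ y - z₀
    have h1 : Ec w = dF (Δ, 0) + (w - dF (Δ, w)) := by
      rw [hEcw w, hsplit Δ w]
      abel
    have h2 : ‖w‖ ≤ c₀ * ‖Ec w‖ := by
      calc ‖w‖ = ‖G (Ec w)‖ := by rw [hGE]
        _ ≤ c₀ * ‖Ec w‖ := G.le_opNorm _
    have h3 : ‖Ec w‖ ≤ ‖dF‖ * ‖Δ‖ + c1 * (‖Δ‖ + ‖w‖) := by
      rw [h1]
      calc ‖dF (Δ, 0) + (w - dF (Δ, w))‖ ≤ ‖dF (Δ, 0)‖ + ‖w - dF (Δ, w)‖ := norm_add_le _ _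
        _ ≤ ‖dF‖ * ‖Δ‖ + c1 * (‖Δ‖ + ‖w‖) := by
            refine add_le_add ?_ hk
            calc ‖dF (Δ, 0)‖ ≤ ‖dF‖ * ‖((Δ, (0 : Fin n → ℂ)) : _ × _)‖ := dF.le_opNorm _
              _ = ‖dF‖ * ‖Δ‖ := by rw [hnormfst]
    have h4 : c₀ * c1 ≤ 1 / 2 := by
      rw [hc1def, mul_one_div, div_le_div_iff₀ (by linarith) (by norm_num)]
      linarith
    have h5 : ‖w‖ ≤ c₀ * (‖dF‖ * ‖Δ‖ + c1 * (‖Δ‖ + ‖w‖)) :=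
      le_trans h2 (mul_le_mul_of_nonneg_left h3 hc₀0)
    have h6 : c₀ * c1 * ‖Δ‖ ≤ 1/2 * ‖Δ‖ := mul_le_mul_of_nonneg_right h4 (norm_nonneg _)
    have h7 : c₀ * c1 * ‖w‖ ≤ 1/2 * ‖w‖ := mul_le_mul_of_nonneg_right h4 (norm_nonneg _)
    have h8 : c₀ * (‖dF‖ * ‖Δ‖ + c1 * (‖Δ‖ + ‖w‖))
        = c₀ * ‖dF‖ * ‖Δ‖ + c₀ * c1 * ‖Δ‖ + c₀ * c1 * ‖w‖ := by ring
    rw [h8] at h5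
    rw [hC₁def]
    linarith
  -- the derivative of τ
  set T : (Fin m → ℂ) →L[ℂ] (Fin n → ℂ) :=
    G.comp (dF.comp (ContinuousLinearMap.inl ℂ (Fin m → ℂ) (Fin n → ℂ))) with hTdef
  have hTapp : ∀ Δ, T Δ = G (dF (Δ, 0)) := by
    intro Δ
    rw [hTdef]
    simp only [ContinuousLinearMap.coe_comp', Function.comp_apply,
      ContinuousLinearMap.inl_apply]
  have hT : HasFDerivAt τ T y₀ := by
    refine HasFDerivAt.of_isLittleO ?_
    rw [Asymptotics.isLittleO_iff]
    intro ε hε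
    have hc2pos : 0 < min c1 (ε / ((c₀ + 1) * (1 + C₁))) := by positivity
    filter_upwards [hkey _ hc2pos, hwle, hYopen.mem_nhds hy₀] with y hk hw hyY
    rw [← hz₀def]
    set c2 : ℝ := min c1 (ε / ((c₀ + 1) * (1 + C₁))) with hc2def
    set Δ : Fin m → ℂ := y - y₀ with hΔdef
    set w : Fin n → ℂ := τ y - z₀ with hwdef
    have hc2nn : 0 ≤ c2 := hc2pos.le
    have hid : τ y - z₀ - T Δ = G (w - dF (Δ, w)) := by
      have e1 : w - dF (Δ, w) = Ec w - dF (Δ, 0) := by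
        rw [hEcw w, hsplit Δ w]; abel
      rw [e1]
      conv_rhs => rw [map_sub]
      rw [hGE w, hTapp Δ, hwdef]
    have hb3 : ‖Δ‖ + ‖w‖ ≤ (1 + C₁) * ‖Δ‖ := by
      have : (1 + C₁) * ‖Δ‖ = ‖Δ‖ + C₁ * ‖Δ‖ := by ring
      rw [this]
      linarith [hw]
    have hX : (0:ℝ) < (c₀ + 1) * (1 + C₁) := by positivity
    have h1 : c2 ≤ ε / ((c₀ + 1) * (1 + C₁)) := min_le_right _ _
    have h2 : c2 * ((c₀ + 1) * (1 + C₁)) ≤ ε := (le_div_iff₀ hX).1 h1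
    have h3 : c₀ * (c2 * (1 + C₁)) ≤ ε := by nlinarith [hc2nn, hC₁0, hc₀0]
    calc ‖τ y - z₀ - T Δ‖ = ‖G (w - dF (Δ, w))‖ := by rw [hid]
      _ ≤ c₀ * ‖w - dF (Δ, w)‖ := G.le_opNorm _
      _ ≤ c₀ * (c2 * (‖Δ‖ + ‖w‖)) := mul_le_mul_of_nonneg_left hk hc₀0
      _ ≤ c₀ * (c2 * ((1 + C₁) * ‖Δ‖)) :=
          mul_le_mul_of_nonneg_left (mul_le_mul_of_nonneg_left hb3 hc2nn) hc₀0
      _ = (c₀ * (c2 * (1 + C₁))) * ‖Δ‖ := by ring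
      _ ≤ ε * ‖Δ‖ := mul_le_mul_of_nonneg_right h3 (norm_nonneg Δ)
  refine ⟨hT.differentiableAt, hbij, fun v => ?_⟩
  rw [hT.fderiv, hTapp, hEG]
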